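/- Let α be a root of X³ − 3X − 1. Then the norm from ℚ(α) to ℚ of −P² + (−5 + α + α²)·R² equals −P⁶ − 9P⁴R² − 18P²R⁴ + 9R⁶ for all rational P, R. -/

import Mathlib

open IntermediateField Polynomial

noncomputable def pQ : ℚ[X] := X ^ 3 - C 3 * X - C 1

lemma pQ_monic : pQ.Monic := by
  unfold pQ
  monicity!

lemma pQ_natDegree : pQ.natDegree = 3 := by
  unfold pQ
  compute_degree!

lemma pQ_irr : Irreducible pQ := by
  rw [irreducible_iff_roots_eq_zero_of_degree_le_three (by rw [pQ_natDegree]; norm_num)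
    (by rw [pQ_natDegree])]
  rw [Multiset.eq_zero_iff_forall_notMem]
  intro q hq
  rw [mem_roots pQ_monic.ne_zero] at hq
  have hq' : q ^ 3 - 3 * q - 1 = 0 := by
    simpa [pQ, IsRoot] using hq
  have hz : Polynomial.aeval q ((X ^ 3 - C 3 * X - C 1 : ℤ[X])) = 0 := by
    simp only [map_sub, map_mul, map_pow, aeval_X, aeval_C, map_ofNat, map_one]
    linarith [hq']
  have hmonic : ((X ^ 3 - C 3 * X - C 1 : ℤ[X])).Monic := by monicity!
  obtain ⟨n, hn, hdvd⟩ := exists_integer_of_is_root_of_monic hmonic hz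
  have hc : ((X ^ 3 - C 3 * X - C 1 : ℤ[X])).coeff 0 = -1 := by
    simp [coeff_sub, coeff_X, coeff_C]
  rw [hc] at hdvd
  have hn1 : n = 1 ∨ n = -1 := by
    have := Int.isUnit_iff.mp (isUnit_of_dvd_unit hdvd (by norm_num))
    exact this
  have hqn : q = (n : ℚ) := by simpa using hn
  rcases hn1 with rfl | rfl <;> rw [hqn] at hq' <;> norm_num at hq'

theorem stmt_12 (α : ℝ) (hα : α ^ 3 - 3 * α - 1 = 0) (P R : ℚ) :
    Algebra.norm ℚ
        (-(P : ℚ⟮α⟯) ^ 2 +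
          (-5 + AdjoinSimple.gen ℚ α + (AdjoinSimple.gen ℚ α) ^ 2) * (R : ℚ⟮α⟯) ^ 2) =
      -P ^ 6 - 9 * P ^ 4 * R ^ 2 - 18 * P ^ 2 * R ^ 4 + 9 * R ^ 6 := by
  have hroot : (Polynomial.aeval α) pQ = 0 := by
    simp only [pQ, map_sub, map_mul, map_pow, aeval_X, aeval_C, map_ofNat, map_one]
    linarith [hα]
  have hint : IsIntegral ℚ α := ⟨pQ, pQ_monic, by simpa [Polynomial.aeval_def] using hroot⟩
  have hmin : minpoly ℚ α = pQ := (minpoly.eq_of_irreducible_of_monic pQ_irr hroot pQ_monic).symm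
  set x := AdjoinSimple.gen ℚ α with hxdef
  have halg : ∀ q : ℚ, algebraMap ℚ ℚ⟮α⟯ q = (q : ℚ⟮α⟯) := fun q => by
    rw [eq_ratCast (algebraMap ℚ ℚ⟮α⟯) q]
  have hx3 : x ^ 3 = 3 * x + 1 := by
    have h := aeval_gen_minpoly ℚ α
    rw [hmin] at h
    simp only [pQ, map_sub, map_mul, map_pow, aeval_X, aeval_C, map_ofNat, map_one] at h
    linear_combination h
  let pb := adjoin.powerBasis hint
  have hdim : pb.dim = 3 := by
    show (minpoly ℚ α).natDegree = 3
    rw [hmin, pQ_natDegree]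
  let b : Module.Basis (Fin 3) ℚ ℚ⟮α⟯ := pb.basis.reindex (finCongr hdim)
  have hb : ∀ i : Fin 3, b i = x ^ (i : ℕ) := by
    intro i
    rw [Module.Basis.reindex_apply, pb.basis_eq_pow]
    rfl
  set β : ℚ⟮α⟯ := -(P : ℚ⟮α⟯) ^ 2 + (-5 + x + x ^ 2) * (R : ℚ⟮α⟯) ^ 2 with hβ
  let a0 : ℚ := -P ^ 2 - 5 * R ^ 2
  let a1 : ℚ := R ^ 2
  let a2 : ℚ := R ^ 2
  let M : Matrix (Fin 3) (Fin 3) ℚ :=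
    Matrix.of ![![a0, a2, a1], ![a1, a0 + 3 * a2, 3 * a1 + a2], ![a2, a1, a0 + 3 * a2]]
  have key : ∀ j : Fin 3, β * b j = ∑ i : Fin 3, M i j • b i := by
    intro j
    have h0 : b 0 = 1 := by rw [hb]; norm_num
    have h1 : b 1 = x := by rw [hb]; norm_num
    have h2 : b 2 = x ^ 2 := by rw [hb]; norm_num
    fin_cases j <;> rw [Fin.sum_univ_three]
    · show β * b 0 = M 0 0 • b 0 + M 1 0 • b 1 + M 2 0 • b 2
      simp only [h0, h1, h2, Algebra.smul_def, halg]
      show β * 1 = ((a0 : ℚ⟮α⟯)) * 1 + (a1 : ℚ⟮α⟯) * x + (a2 : ℚ⟮α⟯) * x ^ 2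
      rw [hβ]
      simp only [a0, a1, a2]
      push_cast
      ring
    · show β * b 1 = M 0 1 • b 0 + M 1 1 • b 1 + M 2 1 • b 2
      simp only [h0, h1, h2, Algebra.smul_def, halg]
      show β * x = ((a2 : ℚ⟮α⟯)) * 1 + ((a0 + 3 * a2 : ℚ) : ℚ⟮α⟯) * x + (a1 : ℚ⟮α⟯) * x ^ 2
      rw [hβ]
      simp only [a0, a1, a2]
      push_cast
      linear_combination (R : ℚ⟮α⟯) ^ 2 * hx3
    · show β * b 2 = M 0 2 • b 0 + M 1 2 • b 1 + M 2 2 • b 2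
      simp only [h0, h1, h2, Algebra.smul_def, halg]
      show β * x ^ 2 = ((a1 : ℚ⟮α⟯)) * 1 + ((3 * a1 + a2 : ℚ) : ℚ⟮α⟯) * x +
        ((a0 + 3 * a2 : ℚ) : ℚ⟮α⟯) * x ^ 2
      rw [hβ]
      simp only [a0, a1, a2]
      push_cast
      linear_combination ((R : ℚ⟮α⟯) ^ 2 * x + (R : ℚ⟮α⟯) ^ 2) * hx3
  rw [Algebra.norm_eq_matrix_det b]
  have hM : Algebra.leftMulMatrix b β = M := by
    ext i j
    rw [Algebra.leftMulMatrix_eq_repr_mul, key j, b.repr_sum_self]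
  rw [hM, Matrix.det_fin_three]
  simp only [M, Matrix.of_apply, Matrix.cons_val', Matrix.cons_val_zero, Matrix.cons_val_one,
    Matrix.head_cons, Matrix.cons_val_two, Matrix.tail_cons, Matrix.head_fin_const,
    Matrix.cons_val_fin_one]
  simp only [a0, a1, a2]
  ring
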